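/- With γ₀(p) = g₀·p/(σ²(1+ηγ*) + ηγ*h₀·p), a point p > 0 is a critical point of the map p ↦ f(γ₀(p))/p if and only if γ = γ₀(p) satisfies (γ - (h₀γ*η/g₀)·γ²)·f'(γ) = f(γ). -/

import Mathlib

/-- First-order condition for the leader: p > 0 is a critical point of
p ↦ f(γ₀(p))/p iff γ = γ₀(p) satisfies (γ - (h₀γ*η/g₀)γ²)f'(γ) = f(γ). -/
theorem leader_first_order_condition
    (f : ℝ → ℝ) (σ2 g0 h0 γs η p : ℝ)
    (hσ : 0 < σ2) (hg0 : 0 < g0) (hh0 : 0 < h0) (hγs : 0 < γs)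
    (hη : 0 < η) (hp : 0 < p)
    (γ0 : ℝ → ℝ)
    (hγ0 : ∀ q, γ0 q = g0 * q / (σ2 * (1 + η * γs) + η * γs * h0 * q))
    (hdf : DifferentiableAt ℝ f (γ0 p)) :
    deriv (fun q => f (γ0 q) / q) p = 0 ↔
      (γ0 p - h0 * γs * η / g0 * (γ0 p) ^ 2) * deriv f (γ0 p) = f (γ0 p) := by
  set A := σ2 * (1 + η * γs) with hAdef
  set B := η * γs * h0 with hBdef
  have hA : 0 < A := by positivity
  have hB : 0 < B := by positivity
  have hD : 0 < A + B * p := by positivity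
  have hDne : A + B * p ≠ 0 := hD.ne'
  have hγfun : γ0 = fun q => g0 * q / (A + B * q) := funext hγ0
  have hγ : HasDerivAt γ0 (g0 * A / (A + B * p) ^ 2) p := by
    rw [hγfun]
    have h1 : HasDerivAt (fun q : ℝ => g0 * q) g0 p := by
      simpa using (hasDerivAt_id p).const_mul g0
    have h2 : HasDerivAt (fun q : ℝ => A + B * q) B p := by
      simpa using ((hasDerivAt_id p).const_mul B).const_add A
    have h3 := h1.fun_div h2 hDne
    refine h3.congr_deriv ?_
    ring
  have hfγ : HasDerivAt (fun q => f (γ0 q))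
      (deriv f (γ0 p) * (g0 * A / (A + B * p) ^ 2)) p :=
    hdf.hasDerivAt.comp p hγ
  have hmain : HasDerivAt (fun q => f (γ0 q) / q)
      ((deriv f (γ0 p) * (g0 * A / (A + B * p) ^ 2) * p - f (γ0 p) * 1) / p ^ 2) p :=
    hfγ.div (hasDerivAt_id p) hp.ne'
  rw [hmain.deriv]
  have hγp : γ0 p = g0 * p / (A + B * p) := hγ0 p
  have hkey : γ0 p - h0 * γs * η / g0 * (γ0 p) ^ 2
      = p * (g0 * A / (A + B * p) ^ 2) := by
    rw [hγp, hAdef]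
    field_simp
    ring
  rw [hkey, div_eq_zero_iff]
  have hp2 : (p : ℝ) ^ 2 ≠ 0 := by positivity
  constructor
  · rintro (h | h)
    · linear_combination h
    · exact absurd h hp2
  · intro h
    left
    linear_combination h
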